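/- Let p, q, k, m be natural numbers with k ≤ p ≤ q ≤ m. If [m choose p]·2^{-[p choose k]} + [m choose q]·2^{-[q choose k]} < 1, then there exists a two-coloring of the △_k subsets of a triangular board with m levels such that no △_p has all of its △_k subsets in the first color and no △_q has all of its △_k subsets in the second color; hence R_1(p,q,k) > m. -/

import Mathlib

/-- The `n`-th triangular number. -/
def T (n : ℕ) : ℕ := n * (n + 1) / 2

/-- The bracket numbers, defined by the recursion
`[n, k] = [n-1, k] + C(n,k) * [n-1, k-1]` with `[n, 0] = 1` and `[n, n] = 1`. -/
def brack : ℕ → ℕ → ℕ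
  | _, 0 => 1
  | 0, _ + 1 => 0
  | n + 1, k + 1 =>
    if n + 1 = k + 1 then 1
    else brack n (k + 1) + Nat.choose (n + 1) (k + 1) * brack n k

/-- A `△_n` on the triangular board with `m` levels (positions are labeled `1, …, T m`
row by row, row `r` being the labels in `(T (r-1), T r]`): a selection of `n` rows in
increasing order together with `j + 1` positions from the `j`-th selected row. -/
structure BTri (m n : ℕ) where
  row : Fin n → ℕ
  mono : StrictMono row
  row_pos : ∀ j, 1 ≤ row j
  row_le : ∀ j, row j ≤ m
  cells : Fin n → Finset ℕ
  card_cells : ∀ j, (cells j).card = (j : ℕ) + 1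
  cells_mem : ∀ j, cells j ⊆ Finset.Ioc (T (row j - 1)) (T (row j))

/-- The set of positions of a `△_n` on the board. -/
def BTri.toSet {m n : ℕ} (Z : BTri m n) : Finset ℕ := Finset.univ.biUnion Z.cells

/-- `S ≤ Z`: the `△_k` `S` is contained in the `△_n` `Z` in the level-respecting order,
i.e. each level of `S` is contained in a single distinct level of `Z`, in increasing order. -/
def BTri.le {m k n : ℕ} (S : BTri m k) (Z : BTri m n) : Prop :=
  ∃ e : Fin k → Fin n, StrictMono e ∧ ∀ j, S.cells j ⊆ Z.cells (e j)

/-- The triangular Ramsey number `R₁(p, q, k)`: the least `m ≥ max p q` such that every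
two-coloring of the `△_k`'s on the board with `m` levels contains a `△_p` all of whose
`△_k`'s are in color one, or a `△_q` all of whose `△_k`'s are in color two. -/
noncomputable def R1 (p q k : ℕ) : ℕ :=
  sInf {m | max p q ≤ m ∧ ∀ χ : Finset ℕ → Bool,
    (∃ Z : BTri m p, ∀ S : BTri m k, S.le Z → χ S.toSet = true) ∨
    (∃ Z : BTri m q, ∀ S : BTri m k, S.le Z → χ S.toSet = false)}

-- Section A : T lemmas
lemma two_T (n : ℕ) : 2 * T n = n * (n + 1) := by
  have h : 2 ∣ n * (n + 1) := Nat.even_mul_succ_self n |>.two_dvd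
  rw [T, Nat.mul_div_cancel' h]

lemma T_succ (n : ℕ) : T (n + 1) = T n + (n + 1) := by
  have := two_T n
  have := two_T (n + 1)
  nlinarith [this]

lemma T_mono : Monotone T := by
  have : ∀ n, T n ≤ T (n + 1) := fun n => by rw [T_succ]; omega
  exact monotone_nat_of_le_succ this

lemma T_pred_add (r : ℕ) (hr : 1 ≤ r) : T (r - 1) + r = T r := by
  obtain ⟨r, rfl⟩ : ∃ s, r = s + 1 := ⟨r - 1, by omega⟩
  simp [T_succ]

/-- membership of label in the row interval -/
lemma label_mem {r a : ℕ} (hr : 1 ≤ r) (ha : a < r) :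
    T (r - 1) + 1 + a ∈ Finset.Ioc (T (r - 1)) (T r) := by
  have := T_pred_add r hr
  simp only [Finset.mem_Ioc]; omega

lemma row_interval_disjoint {r r' : ℕ} (h : r < r') {x : ℕ}
    (hx : x ∈ Finset.Ioc (T (r - 1)) (T r)) (hx' : x ∈ Finset.Ioc (T (r' - 1)) (T r')) : False := by
  simp only [Finset.mem_Ioc] at hx hx'
  have : T r ≤ T (r' - 1) := T_mono (by omega)
  omega

/-- two cells of (possibly different) triangles lying in a common position force equal rows -/
lemma row_eq_of_mem {r r' : ℕ} {x : ℕ}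
    (hx : x ∈ Finset.Ioc (T (r - 1)) (T r)) (hx' : x ∈ Finset.Ioc (T (r' - 1)) (T r')) : r = r' := by
  rcases lt_trichotomy r r' with h | h | h
  · exact absurd (row_interval_disjoint h hx hx') (by simp)
  · exact h
  · exact absurd (row_interval_disjoint h hx' hx) (by simp)

-- Section B : basic BTri facts
lemma BTri.cells_nonempty {m n : ℕ} (Z : BTri m n) (j : Fin n) : (Z.cells j).Nonempty := by
  rw [← Finset.card_pos, Z.card_cells]; omega

/-- if `S ≤ Z` via `e`, the rows match -/
lemma BTri.row_eq_of_le {m k n : ℕ} {S : BTri m k} {Z : BTri m n} {e : Fin k → Fin n}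
    (he : ∀ j, S.cells j ⊆ Z.cells (e j)) (j : Fin k) : S.row j = Z.row (e j) := by
  obtain ⟨x, hx⟩ := S.cells_nonempty j
  exact row_eq_of_mem (S.cells_mem j hx) (Z.cells_mem (e j) (he j hx))

lemma BTri.le_trans {m k n n' : ℕ} {S : BTri m k} {Z : BTri m n} {W : BTri m n'}
    (h1 : S.le Z) (h2 : Z.le W) : S.le W := by
  obtain ⟨e, he, hc⟩ := h1; obtain ⟨f, hf, hc'⟩ := h2
  exact ⟨f ∘ e, hf.comp he, fun j => (hc j).trans (hc' (e j))⟩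
-- Section B2 : toSet injectivity
lemma BTri.mem_toSet {m n : ℕ} {Z : BTri m n} {x : ℕ} :
    x ∈ Z.toSet ↔ ∃ j, x ∈ Z.cells j := by
  simp [BTri.toSet]

lemma BTri.cells_eq_inter {m n : ℕ} (Z : BTri m n) (j : Fin n) :
    Z.cells j = Z.toSet ∩ Finset.Ioc (T (Z.row j - 1)) (T (Z.row j)) := by
  ext x
  simp only [Finset.mem_inter, BTri.mem_toSet]
  constructor
  · exact fun hx => ⟨⟨j, hx⟩, Z.cells_mem j hx⟩
  · rintro ⟨⟨i, hi⟩, hx⟩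
    have : Z.row i = Z.row j := row_eq_of_mem (Z.cells_mem i hi) hx
    have : i = j := Z.mono.injective this
    rwa [← this]

lemma BTri.eq_of_row_cells {m n : ℕ} {S₁ S₂ : BTri m n}
    (hc : ∀ j, S₁.cells j = S₂.cells j) : S₁ = S₂ := by
  have hr : ∀ j, S₁.row j = S₂.row j := by
    intro j
    obtain ⟨x, hx⟩ := S₁.cells_nonempty j
    exact row_eq_of_mem (S₁.cells_mem j hx) (S₂.cells_mem j (hc j ▸ hx))
  cases S₁; cases S₂
  simp only [BTri.mk.injEq]
  exact ⟨funext hr, funext hc⟩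

lemma BTri.toSet_injective {m n : ℕ} : Function.Injective (BTri.toSet (m := m) (n := n)) := by
  intro S₁ S₂ h
  apply BTri.eq_of_row_cells
  intro j
  obtain ⟨x, hx⟩ := S₁.cells_nonempty j
  have hx2 : x ∈ S₂.toSet := h ▸ (BTri.mem_toSet.2 ⟨j, hx⟩)
  obtain ⟨j', hj'⟩ := BTri.mem_toSet.1 hx2
  have hrow : S₁.row j = S₂.row j' := row_eq_of_mem (S₁.cells_mem j hx) (S₂.cells_mem j' hj')
  have hcc : S₁.cells j = S₂.cells j' := by
    rw [S₁.cells_eq_inter j, S₂.cells_eq_inter j', h, hrow]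
  have : j = j' := by
    have := S₁.card_cells j
    rw [hcc, S₂.card_cells j'] at this
    exact Fin.ext (by omega)
  rw [hcc, this]

-- Section C : finiteness
instance BTri.finite (m n : ℕ) : Finite (BTri m n) := by
  let f : BTri m n → (Fin n → ℕ) × (Fin n → Finset ℕ) := fun Z => (Z.row, Z.cells)
  have hf : Function.Injective f := by
    intro S₁ S₂ h
    simp only [f, Prod.mk.injEq] at h
    exact BTri.eq_of_row_cells (fun j => congrFun h.2 j)
  let g : BTri m n → (Fin n → Fin (m + 1)) × (Fin n → ↥((Finset.range (T m + 1)).powerset)) :=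
    fun Z => (fun j => ⟨Z.row j, Nat.lt_succ_of_le (Z.row_le j)⟩,
      fun j => ⟨Z.cells j, by
        simp only [Finset.mem_powerset]
        intro x hx
        have := Z.cells_mem j hx
        simp only [Finset.mem_Ioc] at this
        have hxm : x ≤ T m := Nat.le_trans this.2 (T_mono (Z.row_le j))
        simp only [Finset.mem_range]; omega⟩)
  have hg : Function.Injective g := by
    intro S₁ S₂ h
    simp only [g, Prod.mk.injEq] at h
    apply BTri.eq_of_row_cells
    intro j
    have := congrFun h.2 j
    exact Subtype.ext_iff.1 this
  exact Finite.of_injective g hg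
-- Section D1 : brack lemmas and the numeric sum lemma
lemma brack_zero (n : ℕ) : brack n 0 = 1 := by cases n <;> rfl

lemma brack_self (n : ℕ) : brack n n = 1 := by
  cases n with
  | zero => rfl
  | succ n => rw [brack]; simp

lemma brack_eq_zero (n k : ℕ) (h : n < k) : brack n k = 0 := by
  induction n generalizing k with
  | zero => obtain ⟨k, rfl⟩ : ∃ j, k = j + 1 := ⟨k - 1, by omega⟩; rfl
  | succ n ihn =>
    obtain ⟨k, rfl⟩ : ∃ j, k = j + 1 := ⟨k - 1, by omega⟩
    rw [brack, if_neg (by omega), ihn _ (by omega), ihn _ (by omega), Nat.mul_zero]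

lemma brack_succ_succ (n k : ℕ) :
    brack (n + 1) (k + 1) = brack n (k + 1) + Nat.choose (n + 1) (k + 1) * brack n k := by
  by_cases h : n = k
  · subst h
    rw [brack, if_pos rfl, brack_eq_zero n (n+1) (by omega), brack_self, Nat.choose_self]
  · rw [brack, if_neg (by omega)]

lemma strictMono_snoc {k : ℕ} {α : Type*} [Preorder α] (g : Fin k → α) (a : α)
    (hg : StrictMono g) (ha : ∀ j, g j < a) : StrictMono (Fin.snoc g a) := by
  intro i j hij
  induction j using Fin.lastCases with
  | last =>
    have hi : i < Fin.last k := hij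
    rcases Fin.exists_castSucc_eq.mpr (Fin.ne_last_of_lt hi) with ⟨i', rfl⟩
    simpa [Fin.snoc_castSucc, Fin.snoc_last] using ha i'
  | cast j' =>
    have hj : i < Fin.last k := lt_of_lt_of_le hij (Fin.le_last _)
    rcases Fin.exists_castSucc_eq.mpr (Fin.ne_last_of_lt hj) with ⟨i', rfl⟩
    simp only [Fin.snoc_castSucc]
    exact hg (by exact_mod_cast hij)

def strictMonoFuns (k n : ℕ) : Finset (Fin k → Fin n) :=
  Finset.univ.filter StrictMono

lemma mem_strictMonoFuns {k n : ℕ} {e : Fin k → Fin n} :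
    e ∈ strictMonoFuns k n ↔ StrictMono e := by
  simp [strictMonoFuns]

lemma strictMonoFuns_zero (n : ℕ) : strictMonoFuns 0 n = {(Fin.elim0 : Fin 0 → Fin n)} := by
  apply Finset.eq_singleton_iff_unique_mem.2
  constructor
  · rw [mem_strictMonoFuns]; exact fun a b h => a.elim0
  · intro e _; funext j; exact j.elim0

lemma sum_strictMonoFuns : ∀ n k : ℕ,
    ∑ e ∈ strictMonoFuns k n, ∏ j : Fin k, Nat.choose ((e j : ℕ) + 1) ((j : ℕ) + 1)
      = brack n k := by
  intro n
  induction n with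
  | zero =>
    intro k
    cases k with
    | zero => rw [brack_zero, strictMonoFuns_zero]; simp
    | succ k =>
      rw [brack_eq_zero 0 (k+1) (by omega)]
      have : strictMonoFuns (k+1) 0 = ∅ :=
        Finset.eq_empty_of_forall_notMem (fun e _ => (e 0).elim0)
      simp [this]
  | succ n ih =>
    intro k
    cases k with
    | zero => rw [brack_zero, strictMonoFuns_zero]; simp
    | succ k =>
      rw [brack_succ_succ]
      rw [← Finset.sum_filter_add_sum_filter_not (strictMonoFuns (k+1) (n+1))
        (fun e => e (Fin.last k) ≠ Fin.last n)]
      congr 1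
      · -- e last ≠ last n : corresponds to brack n (k+1)
        rw [← ih (k+1)]
        refine (Finset.sum_bij' (i := fun (e' : Fin (k+1) → Fin n) _ => Fin.castSucc ∘ e')
          (j := fun (e : Fin (k+1) → Fin (n+1)) he => fun x => (e x).castPred (by
            simp only [Finset.mem_filter, mem_strictMonoFuns] at he
            exact Fin.ne_last_of_lt (lt_of_le_of_lt (he.1.monotone (Fin.le_last x))
              (lt_of_le_of_ne (Fin.le_last _) he.2)))) ?_ ?_ ?_ ?_ ?_).symm
        · intro e' he'
          rw [mem_strictMonoFuns] at he'
          simp only [Finset.mem_filter, mem_strictMonoFuns]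
          refine ⟨fun a b hab => ?_, ?_⟩
          · simpa [Fin.castSucc_lt_castSucc_iff] using he' hab
          · simp only [Function.comp_apply]
            exact Fin.ne_last_of_lt (Fin.castSucc_lt_last (e' (Fin.last k)))
        · intro e he
          rw [mem_strictMonoFuns]
          intro a b hab
          simp only [Fin.castPred_lt_castPred_iff]
          exact (mem_strictMonoFuns.1 (Finset.mem_filter.1 he).1) hab
        · intro e' he'; funext x; simp
        · intro e he; funext x; simp
        · intro e' he'
          apply Finset.prod_congr rfl
          intro x _
          simp
      · -- e last = last n : corresponds to choose * brack n k
        rw [← ih k, Finset.mul_sum]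
        refine (Finset.sum_bij'
          (i := fun (e' : Fin k → Fin n) _ => Fin.snoc (Fin.castSucc ∘ e') (Fin.last n))
          (j := fun (e : Fin (k+1) → Fin (n+1)) he => fun x : Fin k =>
            (e x.castSucc).castPred (by
              simp only [Finset.mem_filter, mem_strictMonoFuns, not_not] at he
              exact Fin.ne_last_of_lt (he.2 ▸ he.1 (Fin.castSucc_lt_last x))))
          ?_ ?_ ?_ ?_ ?_).symm
        · intro e' he'
          rw [mem_strictMonoFuns] at he'
          simp only [Finset.mem_filter, mem_strictMonoFuns, not_not]
          refine ⟨strictMono_snoc _ _ (fun a b hab => ?_) (fun x => ?_), by simp⟩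
          · simpa [Fin.castSucc_lt_castSucc_iff] using he' hab
          · exact Fin.castSucc_lt_last (e' x)
        · intro e he
          rw [mem_strictMonoFuns]
          intro a b hab
          simp only [Fin.castPred_lt_castPred_iff]
          exact (mem_strictMonoFuns.1 (Finset.mem_filter.1 he).1)
            (Fin.castSucc_lt_castSucc_iff.2 hab)
        · intro e' he'; funext x; simp
        · intro e he
          have hlast : e (Fin.last k) = Fin.last n := by
            have := (Finset.mem_filter.1 he).2
            simpa using this
          funext x
          induction x using Fin.lastCases with
          | last => simp [Fin.snoc_last, hlast]
          | cast x => simp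
        · intro e he
          rw [Fin.prod_univ_castSucc]
          simp only [Fin.snoc_castSucc, Fin.snoc_last, Fin.coe_castSucc, Fin.val_last,
            Function.comp_apply, Fin.coe_castPred]
          ring
-- Section D2 : counting sub-triangles of a fixed triangle
variable {m n k : ℕ}

/-- the target sigma-type counting pairs (rows-embedding, cells) -/
abbrev TP (Z : BTri m n) (k : ℕ) : Type :=
  Σ e : ↥(strictMonoFuns k n), ∀ j : Fin k, ↥((Z.cells (e.1 j)).powersetCard ((j : ℕ) + 1))

def TP.bwd (Z : BTri m n) (x : TP Z k) : {S : BTri m k // S.le Z} := by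
  refine ⟨⟨fun j => Z.row (x.1.1 j), fun a b hab => Z.mono (mem_strictMonoFuns.1 x.1.2 hab),
    fun j => Z.row_pos _, fun j => Z.row_le _, fun j => (x.2 j).1, fun j => ?_, fun j => ?_⟩,
    x.1.1, mem_strictMonoFuns.1 x.1.2, fun j => ?_⟩
  · exact ((Finset.mem_powersetCard.1 (x.2 j).2).2)
  · exact le_trans ((Finset.mem_powersetCard.1 (x.2 j).2).1) (Z.cells_mem _)
  · exact ((Finset.mem_powersetCard.1 (x.2 j).2).1)

lemma TP.bwd_injective (Z : BTri m n) : Function.Injective (TP.bwd (k := k) Z) := by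
  intro x y hxy
  obtain ⟨e, c⟩ := x; obtain ⟨e', c'⟩ := y
  have hcells : ∀ j : Fin k, (c j).1 = (c' j).1 := by
    intro j
    have := congrArg (fun S => S.1.cells j) hxy
    simpa [TP.bwd] using this
  have hrows : ∀ j, Z.row (e.1 j) = Z.row (e'.1 j) := by
    intro j
    have := congrArg (fun S => S.1.row j) hxy
    simpa [TP.bwd] using this
  have he : e = e' := by
    apply Subtype.ext; funext j
    exact Z.mono.injective (hrows j)
  subst he
  have : c = c' := funext fun j => Subtype.ext (hcells j)
  rw [this]

noncomputable def TP.fwd (Z : BTri m n) (S : {S : BTri m k // S.le Z}) : TP Z k := by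
  refine ⟨⟨Classical.choose S.2, ?_⟩, fun j => ⟨S.1.cells j, ?_⟩⟩
  · rw [mem_strictMonoFuns]
    exact (Classical.choose_spec S.2).1
  · rw [Finset.mem_powersetCard]
    exact ⟨(Classical.choose_spec S.2).2 j, S.1.card_cells j⟩

lemma TP.fwd_injective (Z : BTri m n) : Function.Injective (TP.fwd (k := k) Z) := by
  intro x y hxy
  apply Subtype.ext
  apply BTri.eq_of_row_cells
  intro j
  have := congrArg (fun z : TP Z k => (z.2 j).1) hxy
  -- the second components do not depend on the first in value
  simpa [TP.fwd] using this
-- Section D3 : the count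
lemma card_subK (Z : BTri m n) :
    Nat.card {S : BTri m k // S.le Z} = brack n k := by
  classical
  have h1 : Nat.card {S : BTri m k // S.le Z} = Nat.card (TP Z k) :=
    le_antisymm (Nat.card_le_card_of_injective _ (TP.fwd_injective Z))
      (Nat.card_le_card_of_injective _ (TP.bwd_injective Z))
  rw [h1, Nat.card_eq_fintype_card]
  have h2 : Fintype.card (TP Z k)
      = ∑ e : ↥(strictMonoFuns k n), ∏ j : Fin k,
          Nat.choose ((e.1 j : ℕ) + 1) ((j : ℕ) + 1) := by
    rw [Fintype.card_sigma]
    congr 1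
    funext e
    rw [Fintype.card_pi]
    congr 1
    funext j
    rw [Fintype.card_coe, Finset.card_powersetCard, Z.card_cells]
  rw [h2, Finset.sum_coe_sort (strictMonoFuns k n)
    (fun e => ∏ j : Fin k, Nat.choose ((e j : ℕ) + 1) ((j : ℕ) + 1))]
  exact sum_strictMonoFuns n k
-- Section D4 : the full board and total counts
def fullBoard (m : ℕ) : BTri m m where
  row := fun j => (j : ℕ) + 1
  mono := fun a b hab => by simpa using hab
  row_pos := fun j => by show 1 ≤ (j : ℕ) + 1; omega
  row_le := fun j => j.2
  cells := fun j => Finset.Ioc (T (j : ℕ)) (T ((j : ℕ) + 1))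
  card_cells := fun j => by
    rw [Nat.card_Ioc]; have := T_succ (j : ℕ); omega
  cells_mem := fun j => by
    simp

lemma BTri.le_full {m n : ℕ} (S : BTri m n) : S.le (fullBoard m) := by
  refine ⟨fun j => ⟨S.row j - 1, by have := S.row_pos j; have := S.row_le j; omega⟩,
    fun a b hab => ?_, fun j => ?_⟩
  · have h1 := S.row_pos a
    have h2 := S.mono hab
    simp only [Fin.mk_lt_mk]
    omega
  · intro x hx
    have := S.cells_mem j hx
    have h1 := S.row_pos j
    simp only [fullBoard]
    have : S.row j - 1 + 1 = S.row j := by omega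
    rw [this]
    exact S.cells_mem j hx

lemma card_BTri (m n : ℕ) : Nat.card (BTri m n) = brack m n := by
  rw [← card_subK (fullBoard m)]
  exact Nat.card_congr (Equiv.subtypeUnivEquiv (fun S => S.le_full)).symm

/-- there is at least one `△_n` when `n ≤ m` -/
lemma BTri.nonempty (m n : ℕ) (h : n ≤ m) : Nonempty (BTri m n) := by
  refine ⟨⟨fun j => (j : ℕ) + 1, fun a b hab => by simpa using hab, fun j => ?_, fun j => ?_,
    fun j => Finset.Ioc (T (j : ℕ)) (T ((j : ℕ) + 1)), fun j => ?_, fun j => ?_⟩⟩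
  · show 1 ≤ (j : ℕ) + 1; omega
  · show (j : ℕ) + 1 ≤ m; have := j.2; omega
  · show (Finset.Ioc (T (j : ℕ)) (T ((j : ℕ) + 1))).card = (j : ℕ) + 1
    rw [Nat.card_Ioc]; have := T_succ (j : ℕ); omega
  · show Finset.Ioc (T (j : ℕ)) (T ((j : ℕ) + 1)) ⊆ _
    simp
-- Section E : the probabilistic (counting) argument
noncomputable local instance (m n : ℕ) : Fintype (BTri m n) := Fintype.ofFinite _

open Finset in
/-- counting colorings prescribed on a subset -/
lemma card_filter_forced {α : Type*} [Fintype α] [DecidableEq α] (s : Finset α) (b : Bool) :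
    (Finset.univ.filter (fun f : α → Bool => ∀ a ∈ s, f a = b)).card
      = 2 ^ (Fintype.card α - s.card) := by
  classical
  have e : {f : α → Bool // ∀ a ∈ s, f a = b} ≃ (↥(sᶜ) → Bool) := by
    refine ⟨fun f a => f.1 a.1, fun g => ⟨fun a => if h : a ∈ s then b else g ⟨a, by simp [h]⟩,
      fun a ha => by simp [ha]⟩, ?_, ?_⟩
    · rintro ⟨f, hf⟩
      apply Subtype.ext
      funext a
      by_cases h : a ∈ s
      · simp [h, hf a h]
      · simp [h]
    · intro g
      funext a
      have h1 : a.1 ∉ s := Finset.mem_compl.1 a.2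
      simp [h1]
  have h1 : (Finset.univ.filter (fun f : α → Bool => ∀ a ∈ s, f a = b)).card
      = Fintype.card {f : α → Bool // ∀ a ∈ s, f a = b} := (Fintype.card_subtype _).symm
  rw [h1, Fintype.card_congr e, Fintype.card_fun]
  simp [Finset.card_compl]

section Coloring
variable (p q k m : ℕ)

lemma exists_good_coloring (hkp : k ≤ p) (hpq : p ≤ q) (hqm : q ≤ m)
    (h : (brack m p : ℝ) * 2 ^ (-(brack p k : ℝ)) +
         (brack m q : ℝ) * 2 ^ (-(brack q k : ℝ)) < 1) :
    ∃ χ : Finset ℕ → Bool,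
      ¬(∃ Z : BTri m p, ∀ S : BTri m k, S.le Z → χ S.toSet = true) ∧
      ¬(∃ Z : BTri m q, ∀ S : BTri m k, S.le Z → χ S.toSet = false) := by
  classical
  set D : Finset (Finset ℕ) := Finset.image BTri.toSet (Finset.univ : Finset (BTri m k)) with hD
  set ext : (↥D → Bool) → (Finset ℕ → Bool) :=
    fun f s => if h : s ∈ D then f ⟨s, h⟩ else false with hext
  -- the "monochromatic" sub-k-sets of a triangle, as a subset of D
  have toSet_mem : ∀ S : BTri m k, S.toSet ∈ D := fun S => Finset.mem_image_of_mem _ (Finset.mem_univ S)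
  -- bad sets
  set bad : ∀ (n : ℕ), BTri m n → Bool → Finset (↥D → Bool) := fun n Z b =>
    Finset.univ.filter (fun f => ∀ S : BTri m k, S.le Z → f ⟨S.toSet, toSet_mem S⟩ = b) with hbad
  have bad_card : ∀ (n : ℕ) (Z : BTri m n) (b : Bool),
      (bad n Z b).card = 2 ^ (D.card - brack n k) := by
    intro n Z b
    set A : Finset ↥D := Finset.image
      (fun S : {S : BTri m k // S.le Z} => (⟨S.1.toSet, toSet_mem S.1⟩ : ↥D)) Finset.univ with hA
    have hAcard : A.card = brack n k := by
      rw [hA, Finset.card_image_of_injective _ (fun S S' hSS' => ?_), Finset.card_univ,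
        Fintype.card_eq_nat_card, card_subK]
      exact Subtype.ext (BTri.toSet_injective (congrArg Subtype.val hSS'))
    have : bad n Z b = Finset.univ.filter (fun f : ↥D → Bool => ∀ a ∈ A, f a = b) := by
      apply Finset.filter_congr
      intro f _
      simp only [hA, Finset.mem_image, Finset.mem_univ, true_and, eq_iff_iff]
      constructor
      · rintro hf a ⟨S, rfl⟩
        exact hf S.1 S.2
      · intro hf S hS
        exact hf _ ⟨⟨S, hS⟩, rfl⟩
    rw [this, card_filter_forced, hAcard]
    congr 1
    simp [Fintype.card_coe]
  -- the union bound
  have union_bound : ∀ (n : ℕ) (b : Bool), n ≤ m →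
      ((Finset.univ : Finset (↥D → Bool)).filter
        (fun f => ∃ Z : BTri m n, ∀ S : BTri m k, S.le Z → f ⟨S.toSet, toSet_mem S⟩ = b)).card
        ≤ brack m n * 2 ^ (D.card - brack n k) := by
    intro n b hnm
    have hsub : (Finset.univ : Finset (↥D → Bool)).filter
        (fun f => ∃ Z : BTri m n, ∀ S : BTri m k, S.le Z → f ⟨S.toSet, toSet_mem S⟩ = b)
        ⊆ (Finset.univ : Finset (BTri m n)).biUnion (fun Z => bad n Z b) := by
      intro f hf
      obtain ⟨Z, hZ⟩ := (Finset.mem_filter.1 hf).2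
      exact Finset.mem_biUnion.2 ⟨Z, Finset.mem_univ _, Finset.mem_filter.2 ⟨Finset.mem_univ _, hZ⟩⟩
    calc _ ≤ ((Finset.univ : Finset (BTri m n)).biUnion (fun Z => bad n Z b)).card :=
          Finset.card_le_card hsub
      _ ≤ ∑ Z : BTri m n, (bad n Z b).card := Finset.card_biUnion_le
      _ = brack m n * 2 ^ (D.card - brack n k) := by
          rw [Finset.sum_congr rfl (fun Z _ => bad_card n Z b), Finset.sum_const,
            Finset.card_univ, Fintype.card_eq_nat_card, card_BTri, smul_eq_mul]
  -- brack n k ≤ D.card for n = p and n = q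
  have hbrackle : ∀ n : ℕ, k ≤ n → n ≤ m → brack n k ≤ D.card := by
    intro n hkn hnm
    obtain ⟨Z⟩ := BTri.nonempty m n hnm
    set A : Finset ↥D := Finset.image
      (fun S : {S : BTri m k // S.le Z} => (⟨S.1.toSet, toSet_mem S.1⟩ : ↥D)) Finset.univ with hA
    have hAcard : A.card = brack n k := by
      rw [hA, Finset.card_image_of_injective _ (fun S S' hSS' => ?_), Finset.card_univ,
        Fintype.card_eq_nat_card, card_subK]
      exact Subtype.ext (BTri.toSet_injective (congrArg Subtype.val hSS'))
    calc brack n k = A.card := hAcard.symm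
      _ ≤ Fintype.card ↥D := by
          simpa using Finset.card_le_card (Finset.subset_univ A)
      _ = D.card := Fintype.card_coe D
  -- the numeric inequality
  have hnum : brack m p * 2 ^ (D.card - brack p k) + brack m q * 2 ^ (D.card - brack q k)
      < 2 ^ D.card := by
    have hle1 : brack p k ≤ D.card := hbrackle p hkp (le_trans hpq hqm)
    have hle2 : brack q k ≤ D.card := hbrackle q (le_trans hkp hpq) hqm
    have cast1 : ∀ (x y : ℕ), y ≤ D.card →
        ((x * 2 ^ (D.card - y) : ℕ) : ℝ) = (x : ℝ) * 2 ^ (-(y : ℝ)) * 2 ^ D.card := by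
      intro x y hy
      have h2 : ((2 : ℝ)) ^ (-(y : ℝ)) = ((2 : ℝ) ^ (y : ℕ))⁻¹ := by
        rw [← Real.rpow_natCast 2 y, ← Real.rpow_neg (by norm_num)]
      push_cast
      rw [h2]
      rw [← pow_sub_mul_pow (2 : ℝ) hy]
      field_simp
    have : ((brack m p * 2 ^ (D.card - brack p k) + brack m q * 2 ^ (D.card - brack q k) : ℕ) : ℝ)
        < ((2 ^ D.card : ℕ) : ℝ) := by
      push_cast [cast1 _ _ hle1, cast1 _ _ hle2]
      calc (brack m p : ℝ) * 2 ^ (-(brack p k : ℝ)) * 2 ^ D.card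
            + (brack m q : ℝ) * 2 ^ (-(brack q k : ℝ)) * 2 ^ D.card
          = ((brack m p : ℝ) * 2 ^ (-(brack p k : ℝ))
            + (brack m q : ℝ) * 2 ^ (-(brack q k : ℝ))) * 2 ^ D.card := by ring
        _ < 1 * 2 ^ D.card := by
            apply mul_lt_mul_of_pos_right h
            positivity
        _ = 2 ^ D.card := by ring
    exact_mod_cast this
  -- find a good f
  have : ∃ f : ↥D → Bool,
      ¬(∃ Z : BTri m p, ∀ S : BTri m k, S.le Z → f ⟨S.toSet, toSet_mem S⟩ = true) ∧
      ¬(∃ Z : BTri m q, ∀ S : BTri m k, S.le Z → f ⟨S.toSet, toSet_mem S⟩ = false) := by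
    by_contra hcon
    have hcover : (Finset.univ : Finset (↥D → Bool)) ⊆
        ((Finset.univ : Finset (↥D → Bool)).filter
          (fun f => ∃ Z : BTri m p, ∀ S : BTri m k, S.le Z → f ⟨S.toSet, toSet_mem S⟩ = true))
        ∪ ((Finset.univ : Finset (↥D → Bool)).filter
          (fun f => ∃ Z : BTri m q, ∀ S : BTri m k, S.le Z → f ⟨S.toSet, toSet_mem S⟩ = false)) := by
      intro f _
      rcases Classical.em (∃ Z : BTri m p, ∀ S : BTri m k, S.le Z →
          f ⟨S.toSet, toSet_mem S⟩ = true) with hc | hc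
      · exact Finset.mem_union_left _ (Finset.mem_filter.2 ⟨Finset.mem_univ _, hc⟩)
      · have hB : ∃ Z : BTri m q, ∀ S : BTri m k, S.le Z → f ⟨S.toSet, toSet_mem S⟩ = false := by
          by_contra hB
          exact hcon ⟨f, hc, hB⟩
        exact Finset.mem_union_right _ (Finset.mem_filter.2 ⟨Finset.mem_univ _, hB⟩)
    have hcard : (2 : ℕ) ^ D.card ≤ brack m p * 2 ^ (D.card - brack p k)
        + brack m q * 2 ^ (D.card - brack q k) := by
      calc (2:ℕ) ^ D.card = Fintype.card (↥D → Bool) := by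
            rw [Fintype.card_fun]
            simp [Fintype.card_coe]
        _ = (Finset.univ : Finset (↥D → Bool)).card := Finset.card_univ.symm
        _ ≤ _ := le_trans (le_trans (Finset.card_le_card hcover) (Finset.card_union_le _ _))
            (Nat.add_le_add (union_bound p true (le_trans hpq hqm)) (union_bound q false hqm))
    omega
  obtain ⟨f, hf1, hf2⟩ := this
  refine ⟨ext f, ?_, ?_⟩
  · intro ⟨Z, hZ⟩
    exact hf1 ⟨Z, fun S hS => by
      have := hZ S hS
      simpa [hext, toSet_mem S] using this⟩
  · intro ⟨Z, hZ⟩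
    exact hf2 ⟨Z, fun S hS => by
      have := hZ S hS
      simpa [hext, toSet_mem S] using this⟩

end Coloring
-- Section F : infinite Ramsey theorem
theorem ramsey_inf : ∀ (r : ℕ) (φ : Finset ℕ → Bool) (X : Set ℕ), X.Infinite →
    ∃ Y : Set ℕ, Y ⊆ X ∧ Y.Infinite ∧ ∃ c, ∀ s : Finset ℕ, ↑s ⊆ Y → s.card = r → φ s = c := by
  intro r
  induction r with
  | zero =>
    intro φ X hX
    refine ⟨X, le_refl X, hX, φ ∅, fun s _ hs => ?_⟩
    rw [Finset.card_eq_zero.1 hs]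
  | succ r ih =>
    intro φ X hX
    have step : ∀ (X' : Set ℕ), X'.Infinite → ∃ (Y : Set ℕ) (c : Bool), Y ⊆ X' ∧ Y.Infinite ∧
        (∀ y ∈ Y, sInf X' < y) ∧
        ∀ s : Finset ℕ, ↑s ⊆ Y → s.card = r → φ (insert (sInf X') s) = c := by
      intro X' hX'
      have h1 : (X' \ Set.Iic (sInf X')).Infinite := hX'.diff (Set.finite_Iic _)
      obtain ⟨Y, hYsub, hYinf, c, hc⟩ := ih (fun s => φ (insert (sInf X') s)) _ h1
      refine ⟨Y, c, fun y hy => (hYsub hy).1, hYinf, fun y hy => ?_, hc⟩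
      have := (hYsub hy).2
      simpa using this
    choose F C hsub hinf hgt hcol using step
    let g : ℕ → {Y : Set ℕ // Y.Infinite} := fun t =>
      Nat.rec ⟨X, hX⟩ (fun _ p => ⟨F p.1 p.2, hinf p.1 p.2⟩) t
    set a : ℕ → ℕ := fun t => sInf (g t).1 with ha
    set c : ℕ → Bool := fun t => C (g t).1 (g t).2 with hc
    have gsucc : ∀ t, (g (t+1)).1 = F (g t).1 (g t).2 := fun t => rfl
    have chain : ∀ t t', t ≤ t' → (g t').1 ⊆ (g t).1 := by
      intro t t' htt'
      induction t' with
      | zero => have : t = 0 := by omega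
                subst this; exact le_refl _
      | succ u ihu =>
        rcases Nat.lt_or_ge t (u+1) with hlt | hge
        · exact le_trans (by rw [gsucc u]; exact hsub _ _) (ihu (by omega))
        · have : t = u + 1 := by omega
          subst this; exact le_refl _
    have hat : ∀ t, a t ∈ (g t).1 := fun t => Nat.sInf_mem (g t).2.nonempty
    have hgt' : ∀ t x, x ∈ (g (t+1)).1 → a t < x := by
      intro t x hx
      rw [gsucc t] at hx
      exact hgt _ _ _ hx
    have hamono : StrictMono a := by
      apply strictMono_nat_of_lt_succ
      intro t
      exact hgt' t _ (hat (t+1))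
    have hmemlater : ∀ t t', t < t' → a t' ∈ (g (t+1)).1 := by
      intro t t' h
      exact chain (t+1) t' h (hat t')
    -- choose the color appearing infinitely often
    have : ∃ cI : Bool, {t | c t = cI}.Infinite := by
      by_cases hf : {t | c t = true}.Infinite
      · exact ⟨true, hf⟩
      · refine ⟨false, ?_⟩
        have hfin := Set.not_infinite.1 hf
        have : {t | c t = true}ᶜ ⊆ {t | c t = false} := by
          intro t ht
          simp only [Set.mem_compl_iff, Set.mem_setOf_eq] at ht ⊢
          cases hcv : c t
          · rfl
          · exact absurd hcv ht
        exact Set.Infinite.mono this hfin.infinite_compl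
    obtain ⟨cI, hI⟩ := this
    refine ⟨a '' {t | c t = cI}, ?_, ?_, cI, ?_⟩
    · rintro y ⟨t, _, rfl⟩
      exact chain 0 t (by omega) (hat t)
    · exact hI.image (Set.injOn_of_injective hamono.injective)
    · intro s hs hcard
      have hsne : s.Nonempty := by
        rw [← Finset.card_pos, hcard]; omega
      obtain ⟨t, htI, hts⟩ : ∃ t, c t = cI ∧ a t = s.min' hsne := by
        have := hs (s.min'_mem hsne)
        obtain ⟨t, ht, h2⟩ := this
        exact ⟨t, ht, h2⟩
      set s' := s.erase (s.min' hsne) with hs'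
      have hsub' : ↑s' ⊆ (g (t+1)).1 := by
        intro y hy
        simp only [hs', Finset.coe_erase, Set.mem_diff, Set.mem_singleton_iff] at hy
        obtain ⟨hys, hyne⟩ := hy
        obtain ⟨t', ht', rfl⟩ := hs hys
        have h1 : s.min' hsne ≤ a t' := s.min'_le _ hys
        have h2 : a t < a t' := by
          rw [hts]
          exact lt_of_le_of_ne h1 (fun hcc => hyne (by rw [← hcc]))
        exact hmemlater t t' (hamono.lt_iff_lt.1 h2)
      have hcard' : s'.card = r := by
        rw [hs', Finset.card_erase_of_mem (s.min'_mem hsne), hcard]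
        omega
      have := hcol (g t).1 (g t).2 s' hsub' hcard'
      have heq : sInf (g t).1 = a t := rfl
      rw [heq, hts, hs', Finset.insert_erase (s.min'_mem hsne)] at this
      exact this.trans htI
-- Section G1 : offsets and enumerations of finsets
def off (j : ℕ) : ℕ := T (j + 1) - 1

lemma T_ge (n : ℕ) : n ≤ T n := by have := two_T n; nlinarith

lemma T_pos (n : ℕ) (h : 1 ≤ n) : 1 ≤ T n := le_trans h (T_ge n)

lemma off_succ (j : ℕ) : off (j + 1) = off j + (j + 2) := by
  unfold off
  have h1 := T_succ (j + 1)
  have h2 := T_pos (j + 1) (by omega)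
  omega

lemma off_mono : Monotone off := by
  apply monotone_nat_of_le_succ
  intro j; rw [off_succ]; omega

lemma off_strictMono : StrictMono off := by
  apply strictMono_nat_of_lt_succ
  intro j; rw [off_succ]; omega

lemma off_zero : off 0 = 0 := rfl

noncomputable def enum (s : Finset ℕ) : ℕ → ℕ :=
  fun i => if h : i < s.card then s.orderEmbOfFin rfl ⟨i, h⟩ else 0

lemma enum_eq_of {s : Finset ℕ} {n : ℕ} (v : Fin n → ℕ) (hv : StrictMono v)
    (hvs : ∀ x, v x ∈ s) (hcard : s.card = n) {i : ℕ} (hi : i < n) :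
    enum s i = v ⟨i, hi⟩ := by
  have h1 : v = s.orderEmbOfFin hcard := Finset.orderEmbOfFin_unique hcard hvs hv
  rw [enum, dif_pos (show i < s.card by omega), h1]
  exact Finset.orderEmbOfFin_eq_orderEmbOfFin_iff.2 rfl

lemma enum_mem {s : Finset ℕ} {i : ℕ} (hi : i < s.card) : enum s i ∈ s := by
  rw [enum, dif_pos hi]
  exact Finset.orderEmbOfFin_mem s rfl _

lemma enum_strictMonoOn {s : Finset ℕ} {i i' : ℕ} (h : i < i') (hi' : i' < s.card) :
    enum s i < enum s i' := by
  rw [enum, enum, dif_pos hi', dif_pos (lt_trans h hi')]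
  exact (s.orderEmbOfFin rfl).strictMono (by simpa using h)

lemma enum_image_range (s : Finset ℕ) : (Finset.range s.card).image (enum s) = s := by
  apply Finset.eq_of_subset_of_card_le
  · intro x hx
    obtain ⟨i, hi, rfl⟩ := Finset.mem_image.1 hx
    exact enum_mem (Finset.mem_range.1 hi)
  · have injon : Set.InjOn (enum s) ↑(Finset.range s.card) := by
      intro i hi i' hi' hii'
      simp only [Finset.coe_range, Set.mem_Iio] at hi hi'
      by_contra hne
      rcases Nat.lt_or_ge i i' with hlt | hge
      · exact absurd hii' (Nat.ne_of_lt (enum_strictMonoOn hlt hi'))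
      · exact absurd hii'.symm (Nat.ne_of_lt (enum_strictMonoOn (by omega) hi))
    have h2 := Finset.card_le_card_of_injOn (enum s)
      (fun i hi => Finset.mem_image_of_mem (enum s) hi) injon
    simpa using h2

lemma enum_image {f : ℕ → ℕ} (hf : StrictMono f) (s : Finset ℕ) {i : ℕ} (hi : i < s.card) :
    enum (s.image f) i = f (enum s i) := by
  have hcard : (s.image f).card = s.card := Finset.card_image_of_injective s hf.injective
  have := enum_eq_of (s := s.image f) (n := s.card)
    (fun x : Fin s.card => f (s.orderEmbOfFin rfl x))
    (fun a b hab => hf ((s.orderEmbOfFin rfl).strictMono hab))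
    (fun x => Finset.mem_image_of_mem f (Finset.orderEmbOfFin_mem s rfl x)) hcard hi
  rw [this, enum, dif_pos hi]

lemma enum_union {s t : Finset ℕ} (hst : ∀ x ∈ s, ∀ y ∈ t, x < y) :
    (∀ i, i < s.card → enum (s ∪ t) i = enum s i) ∧
    (∀ i, i < t.card → enum (s ∪ t) (s.card + i) = enum t i) := by
  have hdisj : Disjoint s t := by
    rw [Finset.disjoint_left]
    intro x hxs hxt
    exact absurd rfl (Nat.ne_of_lt (hst x hxs x hxt))
  have hcard : (s ∪ t).card = s.card + t.card := Finset.card_union_of_disjoint hdisj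
  set v : Fin (s.card + t.card) → ℕ := fun x =>
    if h : (x : ℕ) < s.card then enum s x else enum t ((x : ℕ) - s.card) with hv
  have hvmono : StrictMono v := by
    intro x y hxy
    have hxy' : (x : ℕ) < (y : ℕ) := hxy
    rw [hv]
    by_cases hx : (x : ℕ) < s.card
    · by_cases hy : (y : ℕ) < s.card
      · simp only [dif_pos hx, dif_pos hy]
        exact enum_strictMonoOn hxy' hy
      · simp only [dif_pos hx, dif_neg hy]
        exact hst _ (enum_mem hx) _ (enum_mem (by have := y.2; omega))
    · have hy : ¬ (y : ℕ) < s.card := by omega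
      simp only [dif_neg hx, dif_neg hy]
      exact enum_strictMonoOn (by omega) (by have := y.2; omega)
  have hvmem : ∀ x, v x ∈ s ∪ t := by
    intro x
    rw [hv]
    by_cases hx : (x : ℕ) < s.card
    · simp only [dif_pos hx]
      exact Finset.mem_union_left _ (enum_mem hx)
    · simp only [dif_neg hx]
      exact Finset.mem_union_right _ (enum_mem (by have := x.2; omega))
  constructor
  · intro i hi
    rw [enum_eq_of v hvmono hvmem hcard (by omega), hv]
    simp only [dif_pos hi]
  · intro i hi
    rw [enum_eq_of v hvmono hvmem hcard (by omega)]
    show (if h : (s.card + i) < s.card then enum s (s.card + i)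
      else enum t ((s.card + i) - s.card)) = enum t i
    rw [dif_neg (by omega)]
    congr 1
    omega
-- Section G2 : enumeration of a union of increasing blocks
lemma blocks_lemma : ∀ (k : ℕ) (B : ℕ → Finset ℕ),
    (∀ j, j < k → (B j).card = j + 2) →
    (∀ j j', j < j' → j' < k → ∀ x ∈ B j, ∀ y ∈ B j', x < y) →
    ((Finset.range k).biUnion B).card = off k ∧
    ∀ j, j < k → ∀ i, i < j + 2 →
      enum ((Finset.range k).biUnion B) (off j + i) = enum (B j) i := by
  intro k
  induction k with
  | zero => intro B _ _; simp [off_zero]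
  | succ k ih =>
    intro B hsz hord
    obtain ⟨ihcard, ihenum⟩ := ih B (fun j hj => hsz j (by omega))
      (fun j j' h1 h2 => hord j j' h1 (by omega))
    have hU : (Finset.range (k+1)).biUnion B = ((Finset.range k).biUnion B) ∪ B k := by
      rw [Finset.range_add_one, Finset.biUnion_insert, Finset.union_comm]
    have hord' : ∀ x ∈ (Finset.range k).biUnion B, ∀ y ∈ B k, x < y := by
      intro x hx y hy
      obtain ⟨j, hj, hxj⟩ := Finset.mem_biUnion.1 hx
      exact hord j k (Finset.mem_range.1 hj) (by omega) x hxj y hy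
    obtain ⟨hleft, hright⟩ := enum_union hord'
    have hdisj : Disjoint ((Finset.range k).biUnion B) (B k) := by
      rw [Finset.disjoint_left]
      intro x hx hx'
      exact absurd rfl (Nat.ne_of_lt (hord' x hx x hx'))
    have hcard : ((Finset.range (k+1)).biUnion B).card = off (k+1) := by
      rw [hU, Finset.card_union_of_disjoint hdisj, ihcard, hsz k (by omega), off_succ]
    refine ⟨hcard, ?_⟩
    intro j hj i hi
    rcases Nat.lt_or_ge j k with hjk | hjk
    · rw [hU, hleft _ (by
        rw [ihcard]
        calc off j + i < off j + (j + 2) := by omega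
          _ = off (j+1) := (off_succ j).symm
          _ ≤ off k := off_mono (by omega))]
      exact ihenum j hjk i hi
    · have : j = k := by omega
      subst this
      have h2 : off j + i = ((Finset.range j).biUnion B).card + i := by rw [ihcard]
      rw [hU, h2, hright i (by rw [hsz j (by omega)]; omega)]
-- Section G3 : interpretation of finsets as triangles
def rowOfU (u : ℕ → ℕ) (j : ℕ) : ℕ := u (off j + j + 1)

def cellsOfU (u : ℕ → ℕ) (j : ℕ) : Finset ℕ :=
  (Finset.range (j+1)).image (fun i => T (rowOfU u j - 1) + 1 + u (off j + i))

def labelSet (u : ℕ → ℕ) (k : ℕ) : Finset ℕ := (Finset.range k).biUnion (cellsOfU u)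

noncomputable def colOf (χ : Finset ℕ → Bool) (k : ℕ) (s : Finset ℕ) : Bool :=
  if s.card = off k then χ (labelSet (enum s) k) else true

section MkTri
variable (f : ℕ → ℕ) (hf : StrictMono f) (n : ℕ)

def mkTri : BTri (f (T (n+1))) n where
  row := fun j => f (off (j : ℕ) + (j : ℕ) + 1)
  mono := fun a b hab => hf (by
    have : off (a : ℕ) < off (b : ℕ) := off_strictMono (show (a:ℕ) < (b:ℕ) from hab)
    have h2 := off_succ (a : ℕ)
    have h3 : off ((a : ℕ) + 1) ≤ off (b : ℕ) := off_mono (show (a:ℕ)+1 ≤ (b:ℕ) from hab)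
    omega)
  row_pos := fun j => le_trans (by omega) (hf.le_apply)
  row_le := fun j => hf.monotone (by
    have hj := j.2
    have h1 : off ((j : ℕ) + 1) ≤ off n := off_mono (by omega)
    have h2 := off_succ (j : ℕ)
    have h3 : off n = T (n+1) - 1 := rfl
    have h4 := T_pos (n+1) (by omega)
    omega)
  cells := fun j => (Finset.range ((j : ℕ)+1)).image
    (fun i => T (f (off (j : ℕ) + (j : ℕ) + 1) - 1) + 1 + f (off (j : ℕ) + i))
  card_cells := fun j => by
    rw [Finset.card_image_of_injOn, Finset.card_range]
    intro a ha b hb hab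
    simp only [Finset.coe_range, Set.mem_Iio] at ha hb
    have hab' : T (f (off (j:ℕ) + (j:ℕ) + 1) - 1) + 1 + f (off (j : ℕ) + a)
        = T (f (off (j:ℕ) + (j:ℕ) + 1) - 1) + 1 + f (off (j : ℕ) + b) := hab
    have := hf.injective (show f (off (j:ℕ) + a) = f (off (j:ℕ) + b) by omega)
    omega
  cells_mem := fun j => by
    intro x hx
    obtain ⟨i, hi, rfl⟩ := Finset.mem_image.1 hx
    simp only [Finset.mem_range] at hi
    apply label_mem
    · exact le_trans (by omega) (hf.le_apply)
    · exact hf (by omega)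

lemma mkTri_correspond {k : ℕ} {S : BTri (f (T (n+1))) k} (hS : S.le (mkTri f hf n)) :
    ∃ s : Finset ℕ, (∀ x ∈ s, x ∈ Set.range f) ∧ s.card = off k ∧
      labelSet (enum s) k = S.toSet := by
  obtain ⟨e, he, hsub⟩ := hS
  set Z := mkTri f hf n with hZ
  -- the cell label map of the `e j`-th block
  set lbl : Fin k → ℕ → ℕ := fun j i =>
    T (f (off (e j : ℕ) + (e j : ℕ) + 1) - 1) + 1 + f (off (e j : ℕ) + i) with hlbl
  have hlblmono : ∀ j : Fin k, StrictMono (lbl j) := by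
    intro j a b hab
    simp only [hlbl]
    have := hf (show off (e j : ℕ) + a < off (e j : ℕ) + b by omega)
    omega
  have hcellsZ : ∀ j : Fin k, Z.cells (e j) = (Finset.range ((e j : ℕ)+1)).image (lbl j) := by
    intro j; rfl
  -- preimages of the cells of S
  set I : Fin k → Finset ℕ := fun j =>
    (Finset.range ((e j : ℕ)+1)).filter (fun i => lbl j i ∈ S.cells j) with hI
  have hIsub : ∀ j : Fin k, I j ⊆ Finset.range ((e j : ℕ)+1) := fun j => Finset.filter_subset _ _
  have hIimg : ∀ j : Fin k, (I j).image (lbl j) = S.cells j := by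
    intro j
    apply Finset.Subset.antisymm
    · intro x hx
      obtain ⟨i, hi, rfl⟩ := Finset.mem_image.1 hx
      exact (Finset.mem_filter.1 hi).2
    · intro x hx
      have hx2 : x ∈ Z.cells (e j) := hsub j hx
      rw [hcellsZ j] at hx2
      obtain ⟨i, hi, rfl⟩ := Finset.mem_image.1 hx2
      exact Finset.mem_image_of_mem _ (Finset.mem_filter.2 ⟨hi, hx⟩)
  have hIcard : ∀ j : Fin k, (I j).card = (j : ℕ) + 1 := by
    intro j
    have h1 : ((I j).image (lbl j)).card = (I j).card := by
      apply Finset.card_image_of_injOn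
      intro a _ b _ hab
      exact (hlblmono j).injective hab
    rw [← S.card_cells j, ← hIimg j, h1]
  -- index blocks
  set e' : ℕ → ℕ := fun j => if h : j < k then (e ⟨j, h⟩ : ℕ) else 0 with he'
  set I' : ℕ → Finset ℕ := fun j => if h : j < k then I ⟨j, h⟩ else ∅ with hI'
  set bIdx : ℕ → Finset ℕ := fun j =>
    (I' j).image (fun i => off (e' j) + i) ∪ {off (e' j) + e' j + 1} with hbIdx
  set B : ℕ → Finset ℕ := fun j => (bIdx j).image f with hB
  have hIsub' : ∀ j, j < k → ∀ i ∈ I' j, i ≤ e' j := by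
    intro j hj i hi
    simp only [hI', dif_pos hj] at hi
    have := Finset.mem_range.1 (hIsub ⟨j, hj⟩ hi)
    simp only [he', dif_pos hj]
    omega
  have hbIdx_ord : ∀ j, j < k → ∀ x ∈ bIdx j, x ≤ off (e' j) + e' j + 1 := by
    intro j hj x hx
    simp only [hbIdx, Finset.mem_union, Finset.mem_image, Finset.mem_singleton] at hx
    rcases hx with ⟨i, hi, rfl⟩ | rfl
    · have := hIsub' j hj i hi; omega
    · omega
  have hbIdx_card : ∀ j, j < k → (bIdx j).card = j + 2 := by
    intro j hj
    rw [hbIdx]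
    rw [Finset.card_union_of_disjoint (by
      rw [Finset.disjoint_left]
      intro x hx hx'
      obtain ⟨i, hi, rfl⟩ := Finset.mem_image.1 hx
      have := hIsub' j hj i hi
      simp only [Finset.mem_singleton] at hx'
      omega)]
    rw [Finset.card_image_of_injOn (fun a _ b _ hab => by omega), Finset.card_singleton]
    simp only [hI', dif_pos hj]
    rw [hIcard ⟨j, hj⟩]
  have hB_card : ∀ j, j < k → (B j).card = j + 2 := by
    intro j hj
    rw [hB, Finset.card_image_of_injective _ hf.injective]
    exact hbIdx_card j hj
  have he'mono : ∀ j j', j < j' → j' < k → e' j < e' j' := by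
    intro j j' h1 h2
    simp only [he', dif_pos (show j < k by omega), dif_pos h2]
    exact he (show (⟨j, by omega⟩ : Fin k) < ⟨j', h2⟩ from h1)
  have hB_ord : ∀ j j', j < j' → j' < k → ∀ x ∈ B j, ∀ y ∈ B j', x < y := by
    intro j j' h1 h2 x hx y hy
    rw [hB] at hx hy
    obtain ⟨a, ha, rfl⟩ := Finset.mem_image.1 hx
    obtain ⟨b, hb, rfl⟩ := Finset.mem_image.1 hy
    apply hf
    have h3 := hbIdx_ord j (by omega) a ha
    have h4 : off (e' j) + e' j + 1 < off (e' j') := by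
      have h5 := off_succ (e' j)
      have h6 : off (e' j + 1) ≤ off (e' j') := off_mono (he'mono j j' h1 h2)
      omega
    have h7 : off (e' j') ≤ b := by
      simp only [hbIdx, Finset.mem_union, Finset.mem_image, Finset.mem_singleton] at hb
      rcases hb with ⟨i, hi, rfl⟩ | rfl <;> omega
    omega
  -- the finset
  set s : Finset ℕ := (Finset.range k).biUnion B with hs
  obtain ⟨hscard, hsenum⟩ := blocks_lemma k B hB_card hB_ord
  rw [← hs] at hscard hsenum
  refine ⟨s, ?_, hscard, ?_⟩
  · intro x hx
    obtain ⟨j, _, hxj⟩ := Finset.mem_biUnion.1 hx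
    obtain ⟨a, _, rfl⟩ := Finset.mem_image.1 hxj
    exact ⟨a, rfl⟩
  -- now the computation of the label set
  have henumB : ∀ j, j < k → ∀ i, i < j + 2 → enum (B j) i = f (enum (bIdx j) i) := by
    intro j hj i hi
    rw [hB]
    exact enum_image hf _ (by rw [hbIdx_card j hj]; omega)
  have hbIdx_enum_lt : ∀ j, j < k → ∀ i, i < j + 1 →
      enum (bIdx j) i = off (e' j) + enum (I' j) i := by
    intro j hj i hi
    have hcardim : ((I' j).image (fun i => off (e' j) + i)).card = j + 1 := by
      rw [Finset.card_image_of_injOn (fun a _ b _ hab => by omega)]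
      simp only [hI', dif_pos hj]
      rw [hIcard ⟨j, hj⟩]
    have hord2 : ∀ x ∈ (I' j).image (fun i => off (e' j) + i),
        ∀ y ∈ ({off (e' j) + e' j + 1} : Finset ℕ), x < y := by
      intro x hx y hy
      obtain ⟨i', hi', rfl⟩ := Finset.mem_image.1 hx
      simp only [Finset.mem_singleton] at hy
      subst hy
      have := hIsub' j hj i' hi'
      omega
    obtain ⟨hl, _⟩ := enum_union hord2
    rw [hbIdx, hl i (by rw [hcardim]; omega)]
    rw [enum_image (f := fun i => off (e' j) + i) (fun a b hab => Nat.add_lt_add_left hab _) _ (by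
      have h8 := hIcard ⟨j, hj⟩
      have h9 : ((⟨j, hj⟩ : Fin k) : ℕ) = j := rfl
      simp only [hI', dif_pos hj]
      omega)]
  have hbIdx_enum_top : ∀ j, j < k → enum (bIdx j) (j + 1) = off (e' j) + e' j + 1 := by
    intro j hj
    have hcardim : ((I' j).image (fun i => off (e' j) + i)).card = j + 1 := by
      rw [Finset.card_image_of_injOn (fun a _ b _ hab => by omega)]
      simp only [hI', dif_pos hj]
      rw [hIcard ⟨j, hj⟩]
    have hord2 : ∀ x ∈ (I' j).image (fun i => off (e' j) + i),
        ∀ y ∈ ({off (e' j) + e' j + 1} : Finset ℕ), x < y := by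
      intro x hx y hy
      obtain ⟨i', hi', rfl⟩ := Finset.mem_image.1 hx
      simp only [Finset.mem_singleton] at hy
      subst hy
      have := hIsub' j hj i' hi'
      omega
    obtain ⟨_, hr⟩ := enum_union hord2
    have h0 : enum ({off (e' j) + e' j + 1} : Finset ℕ) 0 = off (e' j) + e' j + 1 := by
      apply enum_eq_of (n := 1) (fun _ => off (e' j) + e' j + 1)
      · intro a b hab
        exact absurd hab (by omega)
      · intro x; exact Finset.mem_singleton_self _
      · exact Finset.card_singleton _
      · omega
    have := hr 0 (by simp)
    rw [Nat.add_zero, hcardim] at this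
    rw [hbIdx, this, h0]
  -- rows come out right
  have hrow : ∀ j (hj : j < k), rowOfU (enum s) j = Z.row (e ⟨j, hj⟩) := by
    intro j hj
    rw [rowOfU, show off j + j + 1 = off j + (j + 1) by omega,
      hsenum j hj (j+1) (by omega), henumB j hj (j+1) (by omega),
      hbIdx_enum_top j hj]
    simp only [hZ, mkTri, he', dif_pos hj]
  -- cells come out right
  have hcells : ∀ j (hj : j < k), cellsOfU (enum s) j = S.cells ⟨j, hj⟩ := by
    intro j hj
    rw [cellsOfU]
    have hstep : ∀ i ∈ Finset.range (j+1),
        T (rowOfU (enum s) j - 1) + 1 + enum s (off j + i)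
          = lbl ⟨j, hj⟩ (enum (I' j) i) := by
      intro i hi
      simp only [Finset.mem_range] at hi
      rw [hrow j hj, hsenum j hj i (by omega), henumB j hj i (by omega),
        hbIdx_enum_lt j hj i hi]
      simp only [hlbl, hZ, mkTri, he', dif_pos hj]
    rw [Finset.image_congr hstep]
    have himgimg : (Finset.range (j+1)).image (fun i => lbl ⟨j, hj⟩ (enum (I' j) i))
        = ((Finset.range (j+1)).image (enum (I' j))).image (lbl ⟨j, hj⟩) := by
      rw [Finset.image_image]
      rfl
    rw [himgimg]
    have hrange : (Finset.range (j+1)).image (enum (I' j)) = I' j := by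
      have hc : (I' j).card = j + 1 := by
        simp only [hI', dif_pos hj]
        rw [hIcard ⟨j, hj⟩]
      rw [← hc]
      exact enum_image_range (I' j)
    rw [hrange]
    simp only [hI', dif_pos hj]
    exact hIimg ⟨j, hj⟩
  -- assemble
  rw [labelSet]
  apply Finset.ext
  intro x
  simp only [Finset.mem_biUnion, Finset.mem_range, BTri.mem_toSet]
  constructor
  · rintro ⟨j, hj, hx⟩
    rw [hcells j hj] at hx
    exact ⟨⟨j, hj⟩, hx⟩
  · rintro ⟨j, hx⟩
    refine ⟨(j : ℕ), j.2, ?_⟩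
    rw [hcells (j : ℕ) j.2]
    simpa using hx

end MkTri
-- Section G4 : per-coloring existence of a good board size
def GOOD (p q k M : ℕ) (χ : Finset ℕ → Bool) : Prop :=
  (∃ Z : BTri M p, ∀ S : BTri M k, S.le Z → χ S.toSet = true) ∨
  (∃ Z : BTri M q, ∀ S : BTri M k, S.le Z → χ S.toSet = false)

lemma exists_strictMono_in {Y : Set ℕ} (hY : Y.Infinite) :
    ∃ f : ℕ → ℕ, StrictMono f ∧ ∀ t, f t ∈ Y := by
  have step : ∀ a : ℕ, ∃ b ∈ Y, a < b := fun a => hY.exists_gt a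
  choose F hF1 hF2 using step
  refine ⟨fun t => Nat.rec (F 0) (fun _ prev => F prev) t,
    strictMono_nat_of_lt_succ (fun t => hF2 _), fun t => ?_⟩
  cases t with
  | zero => exact hF1 0
  | succ t => exact hF1 _

lemma exists_good_M (p q k : ℕ) (χ : Finset ℕ → Bool) : ∃ M, GOOD p q k M χ := by
  obtain ⟨Y, hYsub, hYinf, c, hc⟩ :=
    ramsey_inf (off k) (colOf χ k) Set.univ Set.infinite_univ
  obtain ⟨f, hfmono, hfY⟩ := exists_strictMono_in hYinf
  have key : ∀ n : ℕ, ∀ S : BTri (f (T (n+1))) k, S.le (mkTri f hfmono n) → χ S.toSet = c := by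
    intro n S hS
    obtain ⟨s, hrange, hcard, hlabel⟩ := mkTri_correspond f hfmono n hS
    have hsY : (↑s : Set ℕ) ⊆ Y := by
      intro x hx
      obtain ⟨t, rfl⟩ := hrange x hx
      exact hfY t
    have := hc s hsY hcard
    rw [colOf, if_pos hcard, hlabel] at this
    exact this
  cases c with
  | false => exact ⟨f (T (q+1)), Or.inr ⟨mkTri f hfmono q, key q⟩⟩
  | true => exact ⟨f (T (p+1)), Or.inl ⟨mkTri f hfmono p, key p⟩⟩

-- Section H : monotonicity and compactness
def BTri.lift {M M' n : ℕ} (h : M ≤ M') (Z : BTri M n) : BTri M' n where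
  row := Z.row
  mono := Z.mono
  row_pos := Z.row_pos
  row_le := fun j => Nat.le_trans (Z.row_le j) h
  cells := Z.cells
  card_cells := Z.card_cells
  cells_mem := Z.cells_mem

lemma BTri.descend {M M' k n : ℕ} (h : M ≤ M') (Z : BTri M n) (S' : BTri M' k)
    (hle : S'.le (Z.lift h)) : ∃ S : BTri M k, S.toSet = S'.toSet ∧ S.le Z := by
  obtain ⟨e, he, hsub⟩ := hle
  have hrows : ∀ j, S'.row j = Z.row (e j) := fun j => BTri.row_eq_of_le hsub j
  refine ⟨⟨S'.row, S'.mono, S'.row_pos, fun j => by rw [hrows j]; exact Z.row_le _,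
    S'.cells, S'.card_cells, S'.cells_mem⟩, rfl, e, he, hsub⟩

lemma GOOD_mono {p q k M M' : ℕ} (h : M ≤ M') {χ : Finset ℕ → Bool}
    (hG : GOOD p q k M χ) : GOOD p q k M' χ := by
  rcases hG with ⟨Z, hZ⟩ | ⟨Z, hZ⟩
  · refine Or.inl ⟨Z.lift h, fun S' hS' => ?_⟩
    obtain ⟨S, hSt, hSle⟩ := BTri.descend h Z S' hS'
    rw [← hSt]
    exact hZ S hSle
  · refine Or.inr ⟨Z.lift h, fun S' hS' => ?_⟩
    obtain ⟨S, hSt, hSle⟩ := BTri.descend h Z S' hS'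
    rw [← hSt]
    exact hZ S hSle

lemma GOOD_finitary (p q k M : ℕ) : ∃ s : Finset (Finset ℕ),
    ∀ χ χ' : Finset ℕ → Bool, (∀ i ∈ s, χ i = χ' i) → GOOD p q k M χ → GOOD p q k M χ' := by
  classical
  refine ⟨Finset.image BTri.toSet (Finset.univ : Finset (BTri M k)), ?_⟩
  intro χ χ' hagree hG
  have hval : ∀ S : BTri M k, χ S.toSet = χ' S.toSet := fun S =>
    hagree _ (Finset.mem_image_of_mem _ (Finset.mem_univ S))
  rcases hG with ⟨Z, hZ⟩ | ⟨Z, hZ⟩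
  · exact Or.inl ⟨Z, fun S hS => by rw [← hval S]; exact hZ S hS⟩
  · exact Or.inr ⟨Z, fun S hS => by rw [← hval S]; exact hZ S hS⟩

lemma finitary_compactness {ι : Type*} (G : ℕ → (ι → Bool) → Prop)
    (hmono : ∀ M M' χ, M ≤ M' → G M χ → G M' χ)
    (hfin : ∀ M, ∃ s : Finset ι, ∀ χ χ', (∀ i ∈ s, χ i = χ' i) → G M χ → G M χ')
    (hall : ∀ χ, ∃ M, G M χ) : ∃ M, ∀ χ, G M χ := by
  classical
  by_contra hcon
  push_neg at hcon
  set B : ℕ → Set (ι → Bool) := fun M => {χ | ¬ G M χ} with hB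
  have hdec : ∀ M, B (M + 1) ⊆ B M := by
    intro M χ hχ hGM
    exact hχ (hmono M (M+1) χ (by omega) hGM)
  have hne : ∀ M, (B M).Nonempty := fun M => hcon M
  have hclosed : ∀ M, IsClosed (B M) := by
    intro M
    obtain ⟨s, hs⟩ := hfin M
    set ext : (↥s → Bool) → (ι → Bool) := fun g i => if h : i ∈ s then g ⟨i, h⟩ else false
      with hext
    have heq : B M = ⋃ (g : ↥s → Bool),
        (if ¬ G M (ext g) then {χ : ι → Bool | ∀ i : ↥s, χ i.1 = g i} else ∅) := by
      apply Set.ext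
      intro χ
      simp only [Set.mem_iUnion, hB, Set.mem_setOf_eq]
      constructor
      · intro hχ
        refine ⟨fun i => χ i.1, ?_⟩
        have hagree : ∀ i ∈ s, ext (fun i : ↥s => χ i.1) i = χ i := by
          intro i hi
          simp only [hext, dif_pos hi]
        have : ¬ G M (ext fun i : ↥s => χ i.1) := by
          intro hGext
          exact hχ (hs _ _ hagree hGext)
        rw [if_pos this]
        exact fun i => rfl
      · rintro ⟨g, hg⟩
        by_cases hGe : ¬ G M (ext g)
        · rw [if_pos hGe] at hg
          intro hGχ
          apply hGe
          apply hs χ (ext g) ?_ hGχ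
          intro i hi
          simp only [hext, dif_pos hi]
          exact hg ⟨i, hi⟩
        · rw [if_neg hGe] at hg
          exact absurd hg (Set.notMem_empty χ)
    rw [heq]
    apply isClosed_iUnion_of_finite
    intro g
    split_ifs with hg
    all_goals first
      | exact isClosed_empty
      | · have : {χ : ι → Bool | ∀ i : ↥s, χ i.1 = g i}
              = ⋂ i : ↥s, (fun χ : ι → Bool => χ i.1) ⁻¹' {g i} := by
            apply Set.ext; intro χ; simp [Set.mem_iInter]
          rw [this]
          exact isClosed_iInter
            (fun i => IsClosed.preimage (continuous_apply i.1) (isClosed_discrete _))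
  have hinter : (⋂ M, B M).Nonempty := by
    apply IsCompact.nonempty_iInter_of_sequence_nonempty_isCompact_isClosed B hdec hne
    · exact (hclosed 0).isCompact
    · exact hclosed
  obtain ⟨χ, hχ⟩ := hinter
  obtain ⟨M, hM⟩ := hall χ
  exact (Set.mem_iInter.1 hχ M) hM

lemma exists_uniform_M (p q k : ℕ) : ∃ M, ∀ χ : Finset ℕ → Bool, GOOD p q k M χ := by
  apply finitary_compactness
  · exact fun M M' χ h => GOOD_mono h
  · exact fun M => GOOD_finitary p q k M
  · exact fun χ => exists_good_M p q k χ

/-- Probabilistic lower bound: if `[m,p]·2^{-[p,k]} + [m,q]·2^{-[q,k]} < 1`, then there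
is a two-coloring of the `△_k`'s of the board with `m` levels in which no `△_p` has all
its `△_k`'s in color one and no `△_q` has all its `△_k`'s in color two; hence
`R₁(p, q, k) > m`. -/
theorem R1_prob_lower_bound (p q k m : ℕ) (hkp : k ≤ p) (hpq : p ≤ q) (hqm : q ≤ m)
    (h : (brack m p : ℝ) * 2 ^ (-(brack p k : ℝ)) +
         (brack m q : ℝ) * 2 ^ (-(brack q k : ℝ)) < 1) :
    (∃ χ : Finset ℕ → Bool,
      ¬(∃ Z : BTri m p, ∀ S : BTri m k, S.le Z → χ S.toSet = true) ∧
      ¬(∃ Z : BTri m q, ∀ S : BTri m k, S.le Z → χ S.toSet = false)) ∧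
    m < R1 p q k := by
  obtain ⟨χ, hχ1, hχ2⟩ := exists_good_coloring p q k m hkp hpq hqm h
  have hgoodset : ∀ m' : ℕ, (∀ χ' : Finset ℕ → Bool,
      (∃ Z : BTri m' p, ∀ S : BTri m' k, S.le Z → χ' S.toSet = true) ∨
      (∃ Z : BTri m' q, ∀ S : BTri m' k, S.le Z → χ' S.toSet = false)) → m < m' := by
    intro m' hprop
    by_contra hle
    push_neg at hle
    rcases hprop χ with ⟨Z, hZ⟩ | ⟨Z, hZ⟩
    · apply hχ1
      refine ⟨Z.lift hle, fun S hS => ?_⟩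
      obtain ⟨S₀, hSt, hSle⟩ := BTri.descend hle Z S hS
      rw [← hSt]; exact hZ S₀ hSle
    · apply hχ2
      refine ⟨Z.lift hle, fun S hS => ?_⟩
      obtain ⟨S₀, hSt, hSle⟩ := BTri.descend hle Z S hS
      rw [← hSt]; exact hZ S₀ hSle
  refine ⟨⟨χ, hχ1, hχ2⟩, ?_⟩
  obtain ⟨M, hM⟩ := exists_uniform_M p q k
  have hmem : (max (max p q) M) ∈ {m' | max p q ≤ m' ∧ ∀ χ' : Finset ℕ → Bool,
      (∃ Z : BTri m' p, ∀ S : BTri m' k, S.le Z → χ' S.toSet = true) ∨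
      (∃ Z : BTri m' q, ∀ S : BTri m' k, S.le Z → χ' S.toSet = false)} :=
    ⟨le_max_left _ _, fun χ' => GOOD_mono (le_max_right _ _) (hM χ')⟩
  have hR1mem := Nat.sInf_mem (⟨_, hmem⟩ : Set.Nonempty _)
  exact hgoodset _ hR1mem.2
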